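/- Let p ≥ 1 and r ≥ s ≥ 1 be integers and let G be the graph ℋ(p,r,s) on n = p + r + s + 2 vertices. Then q₂(G) > d₂(G), where q₂(G) is the second largest eigenvalue (with multiplicity) of the signless Laplacian Q(G) and d₂(G) is the second largest vertex degree of G (here d₂(G) = p + s). -/

import Mathlib

open Matrix Finset
set_option maxHeartbeats 1000000

/-- The signless Laplacian matrix `Q(G) = D + A` of a simple graph, over `ℝ`. -/
def sLapMatrix {m : ℕ} (G : SimpleGraph (Fin m)) [DecidableRel G.Adj] :
    Matrix (Fin m) (Fin m) ℝ :=
  G.degMatrix ℝ + G.adjMatrix ℝ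

/-- `q` lists the eigenvalues of `A` (with multiplicity) in non-increasing order. -/
def IsEigSeq {m : ℕ} (A : Matrix (Fin m) (Fin m) ℝ) (q : Fin m → ℝ) : Prop :=
  Antitone q ∧ ∃ (hA : A.IsHermitian) (σ : Equiv.Perm (Fin m)),
    ∀ i, q i = hA.eigenvalues (σ i)

/-- `d` lists the degrees of `G` (with multiplicity) in non-increasing order. -/
def IsDegSeq {m : ℕ} (G : SimpleGraph (Fin m)) [DecidableRel G.Adj] (d : Fin m → ℕ) : Prop :=
  Antitone d ∧ ∃ σ : Equiv.Perm (Fin m), ∀ i, d i = G.degree (σ i)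

/-- The graph `ℋ(p,r,s)` on `p + r + s + 2` vertices: vertex `0` is `u`, vertex `1` is `v`,
vertices `2,…,p+1` form `P` (joined to both `u` and `v`), vertices `p+2,…,p+r+1` form `R`
(pendant at `u`), and vertices `p+r+2,…,p+r+s+1` form `S` (pendant at `v`);
`u` and `v` are not adjacent. -/
def HGraph (p r s : ℕ) : SimpleGraph (Fin (p + r + s + 2)) where
  Adj a b :=
    ((a.val = 0 ∧ 2 ≤ b.val ∧ b.val < p + r + 2) ∨
     (a.val = 1 ∧ 2 ≤ b.val ∧ (b.val < p + 2 ∨ p + r + 2 ≤ b.val))) ∨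
    ((b.val = 0 ∧ 2 ≤ a.val ∧ a.val < p + r + 2) ∨
     (b.val = 1 ∧ 2 ≤ a.val ∧ (a.val < p + 2 ∨ p + r + 2 ≤ a.val)))
  symm := ⟨by intro a b h; tauto⟩
  loopless := ⟨by
    intro a h
    rcases h with (⟨h1, h2, _⟩ | ⟨h1, h2, _⟩) | (⟨h1, h2, _⟩ | ⟨h1, h2, _⟩) <;> omega⟩

instance HGraph.adjDecidable (p r s : ℕ) : DecidableRel (HGraph p r s).Adj := fun a b =>
  inferInstanceAs (Decidable
    (((a.val = 0 ∧ 2 ≤ b.val ∧ b.val < p + r + 2) ∨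
      (a.val = 1 ∧ 2 ≤ b.val ∧ (b.val < p + 2 ∨ p + r + 2 ≤ b.val))) ∨
     ((b.val = 0 ∧ 2 ≤ a.val ∧ a.val < p + r + 2) ∨
      (b.val = 1 ∧ 2 ≤ a.val ∧ (a.val < p + 2 ∨ p + r + 2 ≤ a.val)))))


/-- adjacency condition on values -/
def hcond (p r s : ℕ) (a b : ℕ) : Prop :=
  ((a = 0 ∧ 2 ≤ b ∧ b < p + r + 2) ∨
   (a = 1 ∧ 2 ≤ b ∧ (b < p + 2 ∨ p + r + 2 ≤ b))) ∨
  ((b = 0 ∧ 2 ≤ a ∧ a < p + r + 2) ∨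
   (b = 1 ∧ 2 ≤ a ∧ (a < p + 2 ∨ p + r + 2 ≤ a)))

instance (p r s a b : ℕ) : Decidable (hcond p r s a b) := by unfold hcond; infer_instance

lemma hAdj_iff (p r s : ℕ) (a b : Fin (p+r+s+2)) :
    (HGraph p r s).Adj a b ↔ hcond p r s a.val b.val := Iff.rfl

lemma sum_split {M : Type*} [AddCommMonoid M] (p r s : ℕ) (f : ℕ → M) :
    ∑ i : Fin (p + r + s + 2), f i.val
      = f 0 + f 1 + (∑ k ∈ Finset.Ico 2 (p+2), f k) + (∑ k ∈ Finset.Ico (p+2) (p+r+2), f k)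
        + (∑ k ∈ Finset.Ico (p+r+2) (p+r+s+2), f k) := by
  rw [Fin.sum_univ_eq_sum_range, Finset.range_eq_Ico,
    ← Finset.sum_Ico_consecutive _ (by omega : 0 ≤ p+r+2) (by omega : p+r+2 ≤ p+r+s+2),
    ← Finset.sum_Ico_consecutive _ (by omega : 0 ≤ p+2) (by omega : p+2 ≤ p+r+2),
    ← Finset.sum_Ico_consecutive _ (by omega : 0 ≤ 2) (by omega : 2 ≤ p+2)]
  have : ∑ k ∈ Finset.Ico 0 2, f k = f 0 + f 1 := by
    rw [← Finset.range_eq_Ico]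
    simp [Finset.sum_range_succ]
  rw [this]

lemma sum_const_Ico {M : Type*} [AddCommMonoid M] (a b : ℕ) (c : M) (f : ℕ → M)
    (h : ∀ k, a ≤ k → k < b → f k = c) :
    ∑ k ∈ Finset.Ico a b, f k = (b - a) • c := by
  calc ∑ k ∈ Finset.Ico a b, f k = ∑ _k ∈ Finset.Ico a b, c :=
        Finset.sum_congr rfl (fun k hk => by rw [Finset.mem_Ico] at hk; exact h k hk.1 hk.2)
    _ = (b - a) • c := by rw [Finset.sum_const, Nat.card_Ico]

lemma degree_as_sum (p r s : ℕ) (v : Fin (p+r+s+2)) :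
    (HGraph p r s).degree v
      = ∑ j : Fin (p+r+s+2), (if hcond p r s v.val j.val then 1 else 0) := by
  rw [SimpleGraph.degree, SimpleGraph.neighborFinset_eq_filter, Finset.card_filter]
  exact Finset.sum_congr rfl fun j _ => if_congr (hAdj_iff p r s v j) rfl rfl

lemma degree_formula (p r s : ℕ) (v : Fin (p+r+s+2)) :
    (HGraph p r s).degree v
      = if v.val = 0 then p + r else if v.val = 1 then p + s
        else if v.val < p + 2 then 2 else 1 := by
  rw [degree_as_sum, sum_split p r s (fun m => if hcond p r s v.val m then 1 else 0)]
  have hv := v.isLt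
  rcases (by omega : v.val = 0 ∨ v.val = 1 ∨ (2 ≤ v.val ∧ v.val < p+2)
      ∨ (p+2 ≤ v.val ∧ v.val < p+r+2) ∨ (p+r+2 ≤ v.val)) with h | h | h | h | h
  · rw [sum_const_Ico 2 (p+2) 1 _ (fun k hk1 hk2 => if_pos (by unfold hcond; omega)),
      sum_const_Ico (p+2) (p+r+2) 1 _ (fun k hk1 hk2 => if_pos (by unfold hcond; omega)),
      sum_const_Ico (p+r+2) (p+r+s+2) 0 _ (fun k hk1 hk2 => if_neg (by unfold hcond; omega)),
      if_neg (by unfold hcond; omega), if_neg (by unfold hcond; omega), if_pos h]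
    simp only [smul_eq_mul]; omega
  · rw [sum_const_Ico 2 (p+2) 1 _ (fun k hk1 hk2 => if_pos (by unfold hcond; omega)),
      sum_const_Ico (p+2) (p+r+2) 0 _ (fun k hk1 hk2 => if_neg (by unfold hcond; omega)),
      sum_const_Ico (p+r+2) (p+r+s+2) 1 _ (fun k hk1 hk2 => if_pos (by unfold hcond; omega)),
      if_neg (by unfold hcond; omega), if_neg (by unfold hcond; omega),
      if_neg (by omega), if_pos h]
    simp only [smul_eq_mul]; omega
  · rw [sum_const_Ico 2 (p+2) 0 _ (fun k hk1 hk2 => if_neg (by unfold hcond; omega)),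
      sum_const_Ico (p+2) (p+r+2) 0 _ (fun k hk1 hk2 => if_neg (by unfold hcond; omega)),
      sum_const_Ico (p+r+2) (p+r+s+2) 0 _ (fun k hk1 hk2 => if_neg (by unfold hcond; omega)),
      if_pos (by unfold hcond; omega), if_pos (by unfold hcond; omega),
      if_neg (by omega), if_neg (by omega), if_pos (by omega)]
    simp only [smul_eq_mul]; omega
  · rw [sum_const_Ico 2 (p+2) 0 _ (fun k hk1 hk2 => if_neg (by unfold hcond; omega)),
      sum_const_Ico (p+2) (p+r+2) 0 _ (fun k hk1 hk2 => if_neg (by unfold hcond; omega)),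
      sum_const_Ico (p+r+2) (p+r+s+2) 0 _ (fun k hk1 hk2 => if_neg (by unfold hcond; omega)),
      if_pos (by unfold hcond; omega), if_neg (by unfold hcond; omega),
      if_neg (by omega), if_neg (by omega), if_neg (by omega)]
    simp only [smul_eq_mul]; omega
  · rw [sum_const_Ico 2 (p+2) 0 _ (fun k hk1 hk2 => if_neg (by unfold hcond; omega)),
      sum_const_Ico (p+2) (p+r+2) 0 _ (fun k hk1 hk2 => if_neg (by unfold hcond; omega)),
      sum_const_Ico (p+r+2) (p+r+s+2) 0 _ (fun k hk1 hk2 => if_neg (by unfold hcond; omega)),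
      if_neg (by unfold hcond; omega), if_pos (by unfold hcond; omega),
      if_neg (by omega), if_neg (by omega), if_neg (by omega)]
    simp only [smul_eq_mul]; omega

lemma sLap_mulVec {m : ℕ} (G : SimpleGraph (Fin m)) [DecidableRel G.Adj]
    (w : Fin m → ℝ) (v : Fin m) :
    (sLapMatrix G *ᵥ w) v
      = (G.degree v : ℝ) * w v + ∑ u : Fin m, (if G.Adj v u then w u else 0) := by
  rw [sLapMatrix, Matrix.add_mulVec, Pi.add_apply, SimpleGraph.degMatrix_mulVec_apply,
    SimpleGraph.adjMatrix_mulVec_apply]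
  congr 1
  rw [SimpleGraph.neighborFinset_eq_filter, Finset.sum_filter]

noncomputable def xfun (p r s : ℕ) (t : ℝ) : ℕ → ℝ :=
  fun m => if m = 0 then t else if p+2 ≤ m ∧ m < p+r+2 then 1 else 0

noncomputable def qxfun (p r s : ℕ) (t : ℝ) : ℕ → ℝ :=
  fun m => if m = 0 then (p+r)*t + r else if m = 1 then 0
    else if m < p+2 then t else if m < p+r+2 then 1+t else 0


noncomputable def yfun (p r s : ℕ) (t : ℝ) : ℕ → ℝ :=
  fun m => if m = 1 then t else if p+r+2 ≤ m then 1 else 0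

noncomputable def qyfun (p r s : ℕ) (t : ℝ) : ℕ → ℝ :=
  fun m => if m = 0 then 0 else if m = 1 then (p+s)*t + s
    else if m < p+2 then t else if m < p+r+2 then 0 else 1+t

lemma QX_apply (p r s : ℕ) (t : ℝ) (v : Fin (p+r+s+2)) :
    (sLapMatrix (HGraph p r s) *ᵥ (fun i => xfun p r s t i.val)) v = qxfun p r s t v.val := by
  have e1 : p + 2 - 2 = p := by omega
  have e2 : p + r + 2 - (p + 2) = r := by omega
  have e3 : p + r + s + 2 - (p + r + 2) = s := by omega
  rw [sLap_mulVec, degree_formula]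
  have hsum : ∑ u : Fin (p+r+s+2), (if (HGraph p r s).Adj v u then xfun p r s t u.val else 0)
      = ∑ u : Fin (p+r+s+2), (fun m => if hcond p r s v.val m then xfun p r s t m else 0) u.val :=
    Finset.sum_congr rfl fun u _ => if_congr (hAdj_iff p r s v u) rfl rfl
  rw [hsum, sum_split p r s (fun m => if hcond p r s v.val m then xfun p r s t m else 0)]
  have hv := v.isLt
  rcases (by omega : v.val = 0 ∨ v.val = 1 ∨ (2 ≤ v.val ∧ v.val < p+2)
      ∨ (p+2 ≤ v.val ∧ v.val < p+r+2) ∨ (p+r+2 ≤ v.val)) with h | h | h | h | h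
  · rw [sum_const_Ico 2 (p+2) 0 _ (fun k hk1 hk2 => by
        simp only [xfun]; split_ifs <;> first | rfl | (exfalso; simp only [hcond] at *; omega)),
      sum_const_Ico (p+2) (p+r+2) 1 _ (fun k hk1 hk2 => by
        simp only [xfun]; split_ifs <;> first | rfl | (exfalso; simp only [hcond] at *; omega)),
      sum_const_Ico (p+r+2) (p+r+s+2) 0 _ (fun k hk1 hk2 => by
        simp only [xfun]; split_ifs <;> first | rfl | (exfalso; simp only [hcond] at *; omega)),
      e1, e2, e3]
    unfold hcond xfun qxfun
    split_ifs <;> first | (exfalso; omega) | contradiction | (exfalso; simp_all only [false_and, and_false, or_false, false_or, true_and, and_true]; all_goals omega) | (simp only [nsmul_eq_mul]; push_cast; ring)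
  · rw [sum_const_Ico 2 (p+2) 0 _ (fun k hk1 hk2 => by
        simp only [xfun]; split_ifs <;> first | rfl | (exfalso; simp only [hcond] at *; omega)),
      sum_const_Ico (p+2) (p+r+2) 0 _ (fun k hk1 hk2 => by
        simp only [xfun]; split_ifs <;> first | rfl | (exfalso; simp only [hcond] at *; omega)),
      sum_const_Ico (p+r+2) (p+r+s+2) 0 _ (fun k hk1 hk2 => by
        simp only [xfun]; split_ifs <;> first | rfl | (exfalso; simp only [hcond] at *; omega)),
      e1, e2, e3]
    unfold hcond xfun qxfun
    split_ifs <;> first | (exfalso; omega) | contradiction | (exfalso; simp_all only [false_and, and_false, or_false, false_or, true_and, and_true]; all_goals omega) | (simp only [nsmul_eq_mul]; push_cast; ring)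
  · rw [sum_const_Ico 2 (p+2) 0 _ (fun k hk1 hk2 => by
        simp only [xfun]; split_ifs <;> first | rfl | (exfalso; simp only [hcond] at *; omega)),
      sum_const_Ico (p+2) (p+r+2) 0 _ (fun k hk1 hk2 => by
        simp only [xfun]; split_ifs <;> first | rfl | (exfalso; simp only [hcond] at *; omega)),
      sum_const_Ico (p+r+2) (p+r+s+2) 0 _ (fun k hk1 hk2 => by
        simp only [xfun]; split_ifs <;> first | rfl | (exfalso; simp only [hcond] at *; omega)),
      e1, e2, e3]
    unfold hcond xfun qxfun
    split_ifs <;> first | (exfalso; omega) | contradiction | (exfalso; simp_all only [false_and, and_false, or_false, false_or, true_and, and_true]; all_goals omega) | (simp only [nsmul_eq_mul]; push_cast; ring)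
  · rw [sum_const_Ico 2 (p+2) 0 _ (fun k hk1 hk2 => by
        simp only [xfun]; split_ifs <;> first | rfl | (exfalso; simp only [hcond] at *; omega)),
      sum_const_Ico (p+2) (p+r+2) 0 _ (fun k hk1 hk2 => by
        simp only [xfun]; split_ifs <;> first | rfl | (exfalso; simp only [hcond] at *; omega)),
      sum_const_Ico (p+r+2) (p+r+s+2) 0 _ (fun k hk1 hk2 => by
        simp only [xfun]; split_ifs <;> first | rfl | (exfalso; simp only [hcond] at *; omega)),
      e1, e2, e3]
    unfold hcond xfun qxfun
    split_ifs <;> first | (exfalso; omega) | contradiction | (exfalso; simp_all only [false_and, and_false, or_false, false_or, true_and, and_true]; all_goals omega) | (simp only [nsmul_eq_mul]; push_cast; ring)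
  · rw [sum_const_Ico 2 (p+2) 0 _ (fun k hk1 hk2 => by
        simp only [xfun]; split_ifs <;> first | rfl | (exfalso; simp only [hcond] at *; omega)),
      sum_const_Ico (p+2) (p+r+2) 0 _ (fun k hk1 hk2 => by
        simp only [xfun]; split_ifs <;> first | rfl | (exfalso; simp only [hcond] at *; omega)),
      sum_const_Ico (p+r+2) (p+r+s+2) 0 _ (fun k hk1 hk2 => by
        simp only [xfun]; split_ifs <;> first | rfl | (exfalso; simp only [hcond] at *; omega)),
      e1, e2, e3]
    unfold hcond xfun qxfun
    split_ifs <;> first | (exfalso; omega) | contradiction | (exfalso; simp_all only [false_and, and_false, or_false, false_or, true_and, and_true]; all_goals omega) | (simp only [nsmul_eq_mul]; push_cast; ring)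

lemma QY_apply (p r s : ℕ) (t : ℝ) (v : Fin (p+r+s+2)) :
    (sLapMatrix (HGraph p r s) *ᵥ (fun i => yfun p r s t i.val)) v = qyfun p r s t v.val := by
  have e1 : p + 2 - 2 = p := by omega
  have e2 : p + r + 2 - (p + 2) = r := by omega
  have e3 : p + r + s + 2 - (p + r + 2) = s := by omega
  rw [sLap_mulVec, degree_formula]
  have hsum : ∑ u : Fin (p+r+s+2), (if (HGraph p r s).Adj v u then yfun p r s t u.val else 0)
      = ∑ u : Fin (p+r+s+2), (fun m => if hcond p r s v.val m then yfun p r s t m else 0) u.val :=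
    Finset.sum_congr rfl fun u _ => if_congr (hAdj_iff p r s v u) rfl rfl
  rw [hsum, sum_split p r s (fun m => if hcond p r s v.val m then yfun p r s t m else 0)]
  have hv := v.isLt
  rcases (by omega : v.val = 0 ∨ v.val = 1 ∨ (2 ≤ v.val ∧ v.val < p+2)
      ∨ (p+2 ≤ v.val ∧ v.val < p+r+2) ∨ (p+r+2 ≤ v.val)) with h | h | h | h | h
  · rw [sum_const_Ico 2 (p+2) 0 _ (fun k hk1 hk2 => by
        simp only [yfun]; split_ifs <;> first | rfl | (exfalso; simp only [hcond] at *; omega)),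
      sum_const_Ico (p+2) (p+r+2) 0 _ (fun k hk1 hk2 => by
        simp only [yfun]; split_ifs <;> first | rfl | (exfalso; simp only [hcond] at *; omega)),
      sum_const_Ico (p+r+2) (p+r+s+2) 0 _ (fun k hk1 hk2 => by
        simp only [yfun]; split_ifs <;> first | rfl | (exfalso; simp only [hcond] at *; omega)),
      e1, e2, e3]
    unfold hcond yfun qyfun
    split_ifs <;> first | (exfalso; omega) | contradiction | (exfalso; simp_all only [false_and, and_false, or_false, false_or, true_and, and_true]; all_goals omega) | (simp only [nsmul_eq_mul]; push_cast; ring)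
  · rw [sum_const_Ico 2 (p+2) 0 _ (fun k hk1 hk2 => by
        simp only [yfun]; split_ifs <;> first | rfl | (exfalso; simp only [hcond] at *; omega)),
      sum_const_Ico (p+2) (p+r+2) 0 _ (fun k hk1 hk2 => by
        simp only [yfun]; split_ifs <;> first | rfl | (exfalso; simp only [hcond] at *; omega)),
      sum_const_Ico (p+r+2) (p+r+s+2) 1 _ (fun k hk1 hk2 => by
        simp only [yfun]; split_ifs <;> first | rfl | (exfalso; simp only [hcond] at *; omega)),
      e1, e2, e3]
    unfold hcond yfun qyfun
    split_ifs <;> first | (exfalso; omega) | contradiction | (exfalso; simp_all only [false_and, and_false, or_false, false_or, true_and, and_true]; all_goals omega) | (simp only [nsmul_eq_mul]; push_cast; ring)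
  · rw [sum_const_Ico 2 (p+2) 0 _ (fun k hk1 hk2 => by
        simp only [yfun]; split_ifs <;> first | rfl | (exfalso; simp only [hcond] at *; omega)),
      sum_const_Ico (p+2) (p+r+2) 0 _ (fun k hk1 hk2 => by
        simp only [yfun]; split_ifs <;> first | rfl | (exfalso; simp only [hcond] at *; omega)),
      sum_const_Ico (p+r+2) (p+r+s+2) 0 _ (fun k hk1 hk2 => by
        simp only [yfun]; split_ifs <;> first | rfl | (exfalso; simp only [hcond] at *; omega)),
      e1, e2, e3]
    unfold hcond yfun qyfun
    split_ifs <;> first | (exfalso; omega) | contradiction | (exfalso; simp_all only [false_and, and_false, or_false, false_or, true_and, and_true]; all_goals omega) | (simp only [nsmul_eq_mul]; push_cast; ring)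
  · rw [sum_const_Ico 2 (p+2) 0 _ (fun k hk1 hk2 => by
        simp only [yfun]; split_ifs <;> first | rfl | (exfalso; simp only [hcond] at *; omega)),
      sum_const_Ico (p+2) (p+r+2) 0 _ (fun k hk1 hk2 => by
        simp only [yfun]; split_ifs <;> first | rfl | (exfalso; simp only [hcond] at *; omega)),
      sum_const_Ico (p+r+2) (p+r+s+2) 0 _ (fun k hk1 hk2 => by
        simp only [yfun]; split_ifs <;> first | rfl | (exfalso; simp only [hcond] at *; omega)),
      e1, e2, e3]
    unfold hcond yfun qyfun
    split_ifs <;> first | (exfalso; omega) | contradiction | (exfalso; simp_all only [false_and, and_false, or_false, false_or, true_and, and_true]; all_goals omega) | (simp only [nsmul_eq_mul]; push_cast; ring)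
  · rw [sum_const_Ico 2 (p+2) 0 _ (fun k hk1 hk2 => by
        simp only [yfun]; split_ifs <;> first | rfl | (exfalso; simp only [hcond] at *; omega)),
      sum_const_Ico (p+2) (p+r+2) 0 _ (fun k hk1 hk2 => by
        simp only [yfun]; split_ifs <;> first | rfl | (exfalso; simp only [hcond] at *; omega)),
      sum_const_Ico (p+r+2) (p+r+s+2) 0 _ (fun k hk1 hk2 => by
        simp only [yfun]; split_ifs <;> first | rfl | (exfalso; simp only [hcond] at *; omega)),
      e1, e2, e3]
    unfold hcond yfun qyfun
    split_ifs <;> first | (exfalso; omega) | contradiction | (exfalso; simp_all only [false_and, and_false, or_false, false_or, true_and, and_true]; all_goals omega) | (simp only [nsmul_eq_mul]; push_cast; ring)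

lemma dotXX (p r s : ℕ) (t : ℝ) :
    ∑ i : Fin (p+r+s+2), xfun p r s t i.val * xfun p r s t i.val = t^2 + r := by
  have e1 : p + 2 - 2 = p := by omega
  have e2 : p + r + 2 - (p + 2) = r := by omega
  have e3 : p + r + s + 2 - (p + r + 2) = s := by omega
  rw [sum_split p r s (fun m => xfun p r s t m * xfun p r s t m),
    sum_const_Ico 2 (p+2) (0) _ (fun k hk1 hk2 => by
      unfold xfun; split_ifs <;> first | (exfalso; omega) | contradiction | ring),
    sum_const_Ico (p+2) (p+r+2) (1) _ (fun k hk1 hk2 => by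
      unfold xfun; split_ifs <;> first | (exfalso; omega) | contradiction | ring),
    sum_const_Ico (p+r+2) (p+r+s+2) (0) _ (fun k hk1 hk2 => by
      unfold xfun; split_ifs <;> first | (exfalso; omega) | contradiction | ring),
    e1, e2, e3]
  unfold xfun
  split_ifs <;> first | (exfalso; omega) | contradiction | (simp only [nsmul_eq_mul]; push_cast; ring)

lemma dotYY (p r s : ℕ) (t : ℝ) :
    ∑ i : Fin (p+r+s+2), yfun p r s t i.val * yfun p r s t i.val = t^2 + s := by
  have e1 : p + 2 - 2 = p := by omega
  have e2 : p + r + 2 - (p + 2) = r := by omega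
  have e3 : p + r + s + 2 - (p + r + 2) = s := by omega
  rw [sum_split p r s (fun m => yfun p r s t m * yfun p r s t m),
    sum_const_Ico 2 (p+2) (0) _ (fun k hk1 hk2 => by
      unfold yfun; split_ifs <;> first | (exfalso; omega) | contradiction | ring),
    sum_const_Ico (p+2) (p+r+2) (0) _ (fun k hk1 hk2 => by
      unfold yfun; split_ifs <;> first | (exfalso; omega) | contradiction | ring),
    sum_const_Ico (p+r+2) (p+r+s+2) (1) _ (fun k hk1 hk2 => by
      unfold yfun; split_ifs <;> first | (exfalso; omega) | contradiction | ring),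
    e1, e2, e3]
  unfold yfun
  split_ifs <;> first | (exfalso; omega) | contradiction | (simp only [nsmul_eq_mul]; push_cast; ring)

lemma dotXY (p r s : ℕ) (t : ℝ) :
    ∑ i : Fin (p+r+s+2), xfun p r s t i.val * yfun p r s t i.val = 0 := by
  have e1 : p + 2 - 2 = p := by omega
  have e2 : p + r + 2 - (p + 2) = r := by omega
  have e3 : p + r + s + 2 - (p + r + 2) = s := by omega
  rw [sum_split p r s (fun m => xfun p r s t m * yfun p r s t m),
    sum_const_Ico 2 (p+2) (0) _ (fun k hk1 hk2 => by
      unfold xfun yfun; split_ifs <;> first | (exfalso; omega) | contradiction | ring),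
    sum_const_Ico (p+2) (p+r+2) (0) _ (fun k hk1 hk2 => by
      unfold xfun yfun; split_ifs <;> first | (exfalso; omega) | contradiction | ring),
    sum_const_Ico (p+r+2) (p+r+s+2) (0) _ (fun k hk1 hk2 => by
      unfold xfun yfun; split_ifs <;> first | (exfalso; omega) | contradiction | ring),
    e1, e2, e3]
  unfold xfun yfun
  split_ifs <;> first | (exfalso; omega) | contradiction | (simp only [nsmul_eq_mul]; push_cast; ring)

lemma dotXQX (p r s : ℕ) (t : ℝ) :
    ∑ i : Fin (p+r+s+2), xfun p r s t i.val * qxfun p r s t i.val = (p+r)*t^2 + 2*r*t + r := by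
  have e1 : p + 2 - 2 = p := by omega
  have e2 : p + r + 2 - (p + 2) = r := by omega
  have e3 : p + r + s + 2 - (p + r + 2) = s := by omega
  rw [sum_split p r s (fun m => xfun p r s t m * qxfun p r s t m),
    sum_const_Ico 2 (p+2) (0) _ (fun k hk1 hk2 => by
      unfold xfun qxfun; split_ifs <;> first | (exfalso; omega) | contradiction | ring),
    sum_const_Ico (p+2) (p+r+2) (1+t) _ (fun k hk1 hk2 => by
      unfold xfun qxfun; split_ifs <;> first | (exfalso; omega) | contradiction | ring),
    sum_const_Ico (p+r+2) (p+r+s+2) (0) _ (fun k hk1 hk2 => by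
      unfold xfun qxfun; split_ifs <;> first | (exfalso; omega) | contradiction | ring),
    e1, e2, e3]
  unfold xfun qxfun
  split_ifs <;> first | (exfalso; omega) | contradiction | (simp only [nsmul_eq_mul]; push_cast; ring)

lemma dotYQY (p r s : ℕ) (t : ℝ) :
    ∑ i : Fin (p+r+s+2), yfun p r s t i.val * qyfun p r s t i.val = (p+s)*t^2 + 2*s*t + s := by
  have e1 : p + 2 - 2 = p := by omega
  have e2 : p + r + 2 - (p + 2) = r := by omega
  have e3 : p + r + s + 2 - (p + r + 2) = s := by omega
  rw [sum_split p r s (fun m => yfun p r s t m * qyfun p r s t m),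
    sum_const_Ico 2 (p+2) (0) _ (fun k hk1 hk2 => by
      unfold yfun qyfun; split_ifs <;> first | (exfalso; omega) | contradiction | ring),
    sum_const_Ico (p+2) (p+r+2) (0) _ (fun k hk1 hk2 => by
      unfold yfun qyfun; split_ifs <;> first | (exfalso; omega) | contradiction | ring),
    sum_const_Ico (p+r+2) (p+r+s+2) (1+t) _ (fun k hk1 hk2 => by
      unfold yfun qyfun; split_ifs <;> first | (exfalso; omega) | contradiction | ring),
    e1, e2, e3]
  unfold yfun qyfun
  split_ifs <;> first | (exfalso; omega) | contradiction | (simp only [nsmul_eq_mul]; push_cast; ring)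

lemma dotXQY (p r s : ℕ) (t : ℝ) :
    ∑ i : Fin (p+r+s+2), xfun p r s t i.val * qyfun p r s t i.val = 0 := by
  have e1 : p + 2 - 2 = p := by omega
  have e2 : p + r + 2 - (p + 2) = r := by omega
  have e3 : p + r + s + 2 - (p + r + 2) = s := by omega
  rw [sum_split p r s (fun m => xfun p r s t m * qyfun p r s t m),
    sum_const_Ico 2 (p+2) (0) _ (fun k hk1 hk2 => by
      unfold xfun qyfun; split_ifs <;> first | (exfalso; omega) | contradiction | ring),
    sum_const_Ico (p+2) (p+r+2) (0) _ (fun k hk1 hk2 => by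
      unfold xfun qyfun; split_ifs <;> first | (exfalso; omega) | contradiction | ring),
    sum_const_Ico (p+r+2) (p+r+s+2) (0) _ (fun k hk1 hk2 => by
      unfold xfun qyfun; split_ifs <;> first | (exfalso; omega) | contradiction | ring),
    e1, e2, e3]
  unfold xfun qyfun
  split_ifs <;> first | (exfalso; omega) | contradiction | (simp only [nsmul_eq_mul]; push_cast; ring)

lemma dotYQX (p r s : ℕ) (t : ℝ) :
    ∑ i : Fin (p+r+s+2), yfun p r s t i.val * qxfun p r s t i.val = 0 := by
  have e1 : p + 2 - 2 = p := by omega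
  have e2 : p + r + 2 - (p + 2) = r := by omega
  have e3 : p + r + s + 2 - (p + r + 2) = s := by omega
  rw [sum_split p r s (fun m => yfun p r s t m * qxfun p r s t m),
    sum_const_Ico 2 (p+2) (0) _ (fun k hk1 hk2 => by
      unfold yfun qxfun; split_ifs <;> first | (exfalso; omega) | contradiction | ring),
    sum_const_Ico (p+2) (p+r+2) (0) _ (fun k hk1 hk2 => by
      unfold yfun qxfun; split_ifs <;> first | (exfalso; omega) | contradiction | ring),
    sum_const_Ico (p+r+2) (p+r+s+2) (0) _ (fun k hk1 hk2 => by
      unfold yfun qxfun; split_ifs <;> first | (exfalso; omega) | contradiction | ring),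
    e1, e2, e3]
  unfold yfun qxfun
  split_ifs <;> first | (exfalso; omega) | contradiction | (simp only [nsmul_eq_mul]; push_cast; ring)

lemma dot_eq_inner {n : ℕ} (u w : Fin n → ℝ) :
    u ⬝ᵥ w = (inner (𝕜 := ℝ) (E := EuclideanSpace ℝ (Fin n)) (WithLp.toLp 2 u) (WithLp.toLp 2 w)) := by
  simp [PiLp.inner_apply, dotProduct, RCLike.inner_apply, mul_comm]

lemma two_pos_eigs {n : ℕ} (A : Matrix (Fin n) (Fin n) ℝ) (hA : A.IsHermitian) (c : ℝ)
    (x y : Fin n → ℝ)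
    (h : ∀ a b : ℝ, ¬(a = 0 ∧ b = 0) →
      c * ((a•x+b•y) ⬝ᵥ (a•x+b•y)) < (a•x+b•y) ⬝ᵥ (A *ᵥ (a•x+b•y))) :
    ∃ i j : Fin n, i ≠ j ∧ c < hA.eigenvalues i ∧ c < hA.eigenvalues j := by
  by_contra hcon
  push_neg at hcon
  set V := hA.eigenvectorBasis with hV
  have hrepr : ∀ (z : Fin n → ℝ) (i : Fin n),
      V.repr (WithLp.toLp 2 z) i = (V i : Fin n → ℝ) ⬝ᵥ z := by
    intro z i
    rw [show ((V i : Fin n → ℝ) ⬝ᵥ z) = _ from dot_eq_inner _ z]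
    exact V.repr_apply_apply (WithLp.toLp 2 z) i
  have hAsymm : ∀ (u w : Fin n → ℝ), u ⬝ᵥ (A *ᵥ w) = (A *ᵥ u) ⬝ᵥ w := by
    intro u w
    rw [Matrix.dotProduct_mulVec, ← Matrix.mulVec_transpose]
    have hT : Aᵀ = A := by
      have := hA; rwa [Matrix.IsHermitian, Matrix.conjTranspose_eq_transpose_of_trivial] at this
    rw [hT]
  have hcoA : ∀ (z : Fin n → ℝ) (i : Fin n),
      V.repr (WithLp.toLp 2 (A *ᵥ z)) i = hA.eigenvalues i * V.repr (WithLp.toLp 2 z) i := by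
    intro z i
    rw [hrepr, hrepr, hAsymm]
    have := hA.mulVec_eigenvectorBasis i
    rw [show A *ᵥ (V i : Fin n → ℝ) = hA.eigenvalues i • (V i : Fin n → ℝ) from this,
      smul_dotProduct]
    rfl
  have h1 : ∀ z w : Fin n → ℝ, z ⬝ᵥ w = ∑ i, V.repr (WithLp.toLp 2 z) i * V.repr (WithLp.toLp 2 w) i := by
    intro z w
    calc z ⬝ᵥ w = (inner (𝕜 := ℝ) (E := EuclideanSpace ℝ (Fin n)) (WithLp.toLp 2 z) (WithLp.toLp 2 w)) := dot_eq_inner z w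
      _ = (inner (𝕜 := ℝ) (V.repr (WithLp.toLp 2 z)) (V.repr (WithLp.toLp 2 w))) :=
          (V.repr.inner_map_map (WithLp.toLp 2 z) (WithLp.toLp 2 w)).symm
      _ = ∑ i, V.repr (WithLp.toLp 2 z) i * V.repr (WithLp.toLp 2 w) i := by
          simp only [PiLp.inner_apply, RCLike.inner_apply, starRingEnd_apply, star_trivial]
          exact Finset.sum_congr rfl fun i _ => mul_comm _ _
  have hquadA : ∀ (z : Fin n → ℝ),
      z ⬝ᵥ (A *ᵥ z) = ∑ i, hA.eigenvalues i * (V.repr (WithLp.toLp 2 z) i)^2 := by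
    intro z
    rw [h1]
    refine Finset.sum_congr rfl fun i _ => ?_
    rw [hcoA]; ring
  have hquadN : ∀ (z : Fin n → ℝ), z ⬝ᵥ z = ∑ i, (V.repr (WithLp.toLp 2 z) i)^2 := by
    intro z; rw [h1]; exact Finset.sum_congr rfl fun i _ => by ring
  -- find coefficients a b killing all large-eigenvalue components
  obtain ⟨a, b, hab, hz⟩ : ∃ a b : ℝ, ¬(a = 0 ∧ b = 0) ∧
      ∀ i, c < hA.eigenvalues i → a * V.repr (WithLp.toLp 2 x) i + b * V.repr (WithLp.toLp 2 y) i = 0 := by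
    by_cases hT : ∃ i₀, c < hA.eigenvalues i₀
    · obtain ⟨i₀, hi₀⟩ := hT
      have huniq : ∀ i, c < hA.eigenvalues i → i = i₀ := by
        intro i hi
        by_contra hne
        exact absurd hi₀ (not_lt.2 (hcon i i₀ hne hi))
      by_cases h0 : V.repr (WithLp.toLp 2 y) i₀ = 0 ∧ V.repr (WithLp.toLp 2 x) i₀ = 0
      · exact ⟨1, 0, by simp, fun i hi => by rw [huniq i hi]; simp [h0.2]⟩
      · refine ⟨V.repr (WithLp.toLp 2 y) i₀, -(V.repr (WithLp.toLp 2 x) i₀), by rw [neg_eq_zero]; exact h0, fun i hi => by rw [huniq i hi]; ring⟩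
    · push_neg at hT
      exact ⟨1, 0, by simp, fun i hi => absurd hi (not_lt.2 (hT i))⟩
  set z := a • x + b • y with hzdef
  have hrz : ∀ i, V.repr (WithLp.toLp 2 z) i = a * V.repr (WithLp.toLp 2 x) i + b * V.repr (WithLp.toLp 2 y) i := by
    intro i
    simp only [hrepr, hzdef, dotProduct_add, dotProduct_smul, smul_eq_mul]
  have hle : z ⬝ᵥ (A *ᵥ z) ≤ c * (z ⬝ᵥ z) := by
    rw [hquadA, hquadN, Finset.mul_sum]
    refine Finset.sum_le_sum fun i _ => ?_
    by_cases hi : c < hA.eigenvalues i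
    · rw [hrz, hz i hi]; simp
    · push_neg at hi
      nlinarith [sq_nonneg (V.repr (WithLp.toLp 2 z) i)]
  exact absurd (h a b hab) (not_lt.2 hle)

theorem HGraph_q_two_gt_d_two {p r s : ℕ} (hp : 1 ≤ p) (hrs : s ≤ r) (hs : 1 ≤ s)
    (q : Fin (p + r + s + 2) → ℝ) (hq : IsEigSeq (sLapMatrix (HGraph p r s)) q)
    (d : Fin (p + r + s + 2) → ℕ) (hd : IsDegSeq (HGraph p r s) d) :
    q ⟨1, by omega⟩ > (d ⟨1, by omega⟩ : ℝ) := by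
  obtain ⟨hqanti, hA, σ, hqev⟩ := hq
  obtain ⟨hdanti, τ, hdeq⟩ := hd
  set X : Fin (p+r+s+2) → ℝ := fun i => xfun p r s ((p:ℝ)+s) i.val with hX
  set Y : Fin (p+r+s+2) → ℝ := fun i => yfun p r s ((p:ℝ)+s) i.val with hY
  have hp' : (1:ℝ) ≤ (p:ℝ) := by exact_mod_cast hp
  have hs' : (1:ℝ) ≤ (s:ℝ) := by exact_mod_cast hs
  have hrs' : (s:ℝ) ≤ (r:ℝ) := by exact_mod_cast hrs
  have key : ∀ a b : ℝ, ¬(a = 0 ∧ b = 0) →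
      ((p:ℝ)+s) * ((a•X+b•Y) ⬝ᵥ (a•X+b•Y))
        < (a•X+b•Y) ⬝ᵥ (sLapMatrix (HGraph p r s) *ᵥ (a•X+b•Y)) := by
    intro a b hab
    have hQX : sLapMatrix (HGraph p r s) *ᵥ X = fun i => qxfun p r s ((p:ℝ)+s) i.val :=
      funext (QX_apply p r s ((p:ℝ)+s))
    have hQY : sLapMatrix (HGraph p r s) *ᵥ Y = fun i => qyfun p r s ((p:ℝ)+s) i.val :=
      funext (QY_apply p r s ((p:ℝ)+s))
    have hxx : X ⬝ᵥ X = ((p:ℝ)+s)^2 + r := dotXX p r s ((p:ℝ)+s)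
    have hyy : Y ⬝ᵥ Y = ((p:ℝ)+s)^2 + s := dotYY p r s ((p:ℝ)+s)
    have hxy : X ⬝ᵥ Y = 0 := dotXY p r s ((p:ℝ)+s)
    have hyx : Y ⬝ᵥ X = 0 := by rw [dotProduct_comm]; exact hxy
    have hxqx : X ⬝ᵥ (fun i => qxfun p r s ((p:ℝ)+s) i.val)
        = ((p:ℝ)+r)*((p:ℝ)+s)^2 + 2*r*((p:ℝ)+s) + r := dotXQX p r s ((p:ℝ)+s)
    have hyqy : Y ⬝ᵥ (fun i => qyfun p r s ((p:ℝ)+s) i.val)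
        = ((p:ℝ)+s)*((p:ℝ)+s)^2 + 2*s*((p:ℝ)+s) + s := dotYQY p r s ((p:ℝ)+s)
    have hxqy : X ⬝ᵥ (fun i => qyfun p r s ((p:ℝ)+s) i.val) = 0 := dotXQY p r s ((p:ℝ)+s)
    have hyqx : Y ⬝ᵥ (fun i => qxfun p r s ((p:ℝ)+s) i.val) = 0 := dotYQX p r s ((p:ℝ)+s)
    rw [Matrix.mulVec_add, Matrix.mulVec_smul, Matrix.mulVec_smul, hQX, hQY]
    simp only [add_dotProduct, dotProduct_add, smul_dotProduct,
      dotProduct_smul, smul_eq_mul, hxx, hyy, hxy, hyx, hxqx, hyqy, hxqy, hyqx]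
    have hK1 : 0 < ((r:ℝ)-s)*((p:ℝ)+s)^2 + r*((p:ℝ)+s) + r := by nlinarith
    have hK2 : 0 < (s:ℝ)*((p:ℝ)+s) + s := by nlinarith
    rcases not_and_or.mp hab with ha | hb
    · have ha2 : 0 < a^2 := by positivity
      nlinarith [mul_pos ha2 hK1, mul_nonneg (sq_nonneg b) hK2.le]
    · have hb2 : 0 < b^2 := by positivity
      nlinarith [mul_pos hb2 hK2, mul_nonneg (sq_nonneg a) hK1.le]
  obtain ⟨i, j, hij, hi, hj⟩ := two_pos_eigs _ hA ((p:ℝ)+s) X Y key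
  have hq1 : ((p:ℝ)+s) < q ⟨1, by omega⟩ := by
    have hab : σ.symm i ≠ σ.symm j := fun h => hij (by simpa using congrArg σ h)
    obtain ⟨k, hk1, hkc⟩ : ∃ k : Fin (p+r+s+2), 1 ≤ k.val ∧ ((p:ℝ)+s) < q k := by
      by_cases hai : 1 ≤ (σ.symm i).val
      · exact ⟨σ.symm i, hai, by rw [hqev, Equiv.apply_symm_apply]; exact hi⟩
      · have : 1 ≤ (σ.symm j).val := by
          by_contra hbj
          exact hab (Fin.ext (by omega))
        exact ⟨σ.symm j, this, by rw [hqev, Equiv.apply_symm_apply]; exact hj⟩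
    have : q k ≤ q ⟨1, by omega⟩ := hqanti (by exact hk1)
    linarith
  have hd1 : d ⟨1, by omega⟩ ≤ p + s := by
    by_contra hcon
    push_neg at hcon
    have hbig : ∀ v : Fin (p+r+s+2), p + s < (HGraph p r s).degree v → v.val = 0 := by
      intro v hv
      rw [degree_formula] at hv
      split_ifs at hv <;> omega
    have h0 : p + s < d ⟨0, by omega⟩ :=
      lt_of_lt_of_le hcon (hdanti (by simp [Fin.le_def]))
    have e0 : (τ ⟨0, by omega⟩).val = 0 := hbig _ (by rw [← hdeq]; exact h0)
    have e1 : (τ ⟨1, by omega⟩).val = 0 := hbig _ (by rw [← hdeq]; exact hcon)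
    have : (⟨0, by omega⟩ : Fin (p+r+s+2)) = ⟨1, by omega⟩ :=
      τ.injective (Fin.ext (by omega))
    simp at this
  have hcast : ((d ⟨1, by omega⟩ : ℕ) : ℝ) ≤ (p:ℝ)+s := by
    have h' : ((d ⟨1, by omega⟩ : ℕ) : ℝ) ≤ ((p + s : ℕ) : ℝ) := Nat.cast_le.mpr hd1
    push_cast at h'
    linarith
  linarith
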